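/- Consider n workers running the double error-feedback compression scheme: each worker i keeps an error vector δ_t^{(i)} ∈ ℝ^d with δ_0^{(i)} = 0 and updates δ_{t+1}^{(i)} = z_t^{(i)} + δ_t^{(i)} − 𝒞[z_t^{(i)} + δ_t^{(i)}], and the server keeps δ̄_t with δ̄_0 = 0 and δ̄_{t+1} = (1/n)Σ_{i=1}^n ẑ_t^{(i)} + δ̄_t − 𝒞[(1/n)Σ_{i=1}^n ẑ_t^{(i)} + δ̄_t], where ẑ_t^{(i)} = 𝒞[z_t^{(i)} + δ_t^{(i)}]. Suppose the compressor 𝒞 satisfies E‖𝒞[x] − x‖² ≤ ω‖x‖² for a constant 0 ≤ ω < 1, and suppose E‖z_t^{(i)}‖² ≤ C for all i and t, for a constant C > 0. Then for every worker i and every t ≥ 1, E‖δ_t^{(i)}‖² ≤ 2ω(1+ω)C/(1−ω)². -/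

import Mathlib

open MeasureTheory

lemma young_ineq {E : Type*} [NormedAddCommGroup E] [InnerProductSpace ℝ E]
    (η : ℝ) (hη : 0 < η) (a b : E) :
    ‖a + b‖ ^ 2 ≤ (1 + η) * ‖a‖ ^ 2 + (1 + 1/η) * ‖b‖ ^ 2 := by
  have h1 : ‖a + b‖ ^ 2 = ‖a‖ ^ 2 + 2 * inner ℝ a b + ‖b‖ ^ 2 := norm_add_sq_real a b
  have h2 : (inner ℝ a b : ℝ) ≤ ‖a‖ * ‖b‖ := real_inner_le_norm a b
  have hs : η * (1/η) = 1 := by field_simp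
  nlinarith [sq_nonneg (η * ‖a‖ - ‖b‖), hη.le, sq_nonneg ‖a‖, sq_nonneg ‖b‖]


/-- **Worker-side error bound in double error-feedback compression.**
Each worker `i` keeps an error vector `δ t i` with `δ 0 i = 0` and updates
`δ (t+1) i = z t i + δ t i − 𝒞[z t i + δ t i]`, where the compressed vector
`ẑ t i = 𝒞[z t i + δ t i]` satisfies the `ω`-contraction property in
expectation: `E‖ẑ t i − (z t i + δ t i)‖² ≤ ω·E‖z t i + δ t i‖²` (`0 ≤ ω < 1`).
If `E‖z t i‖² ≤ C` for all `i, t` (with `C > 0`), then for every worker `i`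
and every `t ≥ 1`, `E‖δ t i‖² ≤ 2ω(1+ω)C/(1−ω)²`. -/
theorem worker_error_feedback_residual_bound
    {Ωs : Type*} [MeasurableSpace Ωs] (μ : Measure Ωs) [IsProbabilityMeasure μ]
    (d n : ℕ) (hd : 1 ≤ d) (hn : 1 ≤ n)
    (ω C : ℝ) (hω0 : 0 ≤ ω) (hω1 : ω < 1) (hC : 0 < C)
    (z δ zhat : ℕ → Fin n → Ωs → EuclideanSpace ℝ (Fin d))
    (hδ0 : ∀ i, δ 0 i = 0)
    (hδrec : ∀ t i, δ (t + 1) i = fun w => z t i w + δ t i w - zhat t i w)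
    (hcomp : ∀ t i,
      ∫ w, ‖zhat t i w - (z t i w + δ t i w)‖ ^ 2 ∂μ ≤
        ω * ∫ w, ‖z t i w + δ t i w‖ ^ 2 ∂μ)
    (hz : ∀ t i, ∫ w, ‖z t i w‖ ^ 2 ∂μ ≤ C)
    (hzint : ∀ t i, Integrable (fun w => ‖z t i w‖ ^ 2) μ)
    (hδint : ∀ t i, Integrable (fun w => ‖δ t i w‖ ^ 2) μ) :
    ∀ (i : Fin n) (t : ℕ), 1 ≤ t →
      ∫ w, ‖δ t i w‖ ^ 2 ∂μ ≤ 2 * ω * (1 + ω) * C / (1 - ω) ^ 2 := by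
  intro i
  set B : ℝ := 2 * ω * (1 + ω) * C / (1 - ω) ^ 2 with hB
  have h1ω : 0 < 1 - ω := by linarith
  have hBnn : 0 ≤ B := by
    apply div_nonneg _ (sq_nonneg _)
    nlinarith [mul_nonneg (mul_nonneg hω0 (by linarith : (0:ℝ) ≤ 1 + ω)) hC.le]
  suffices h : ∀ t, ∫ w, ‖δ t i w‖ ^ 2 ∂μ ≤ B by
    intro t _; exact h t
  intro t
  induction t with
  | zero =>
    simp [hδ0 i, hBnn]
  | succ t ih =>
    have hDnn : 0 ≤ ∫ w, ‖δ t i w‖ ^ 2 ∂μ :=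
      integral_nonneg fun w => by positivity
    have hstep : ∫ w, ‖δ (t + 1) i w‖ ^ 2 ∂μ ≤
        ω * ∫ w, ‖z t i w + δ t i w‖ ^ 2 ∂μ := by
      have heq : (fun w => ‖δ (t + 1) i w‖ ^ 2) =
          fun w => ‖zhat t i w - (z t i w + δ t i w)‖ ^ 2 := by
        funext w
        rw [hδrec t i]
        rw [norm_sub_rev]
      rw [heq]
      exact hcomp t i
    have hkey : ω * ∫ w, ‖z t i w + δ t i w‖ ^ 2 ∂μ ≤
        ω * (1 + ω) / (1 - ω) * C + (1 + ω) / 2 * ∫ w, ‖δ t i w‖ ^ 2 ∂μ := by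
      rcases hω0.eq_or_lt with hω | hω
      · rw [← hω]
        simp only [zero_mul, mul_zero]
        nlinarith
      · set η : ℝ := 2 * ω / (1 - ω) with hηdef
        have hη : 0 < η := by positivity
        have hgint : Integrable
            (fun w => (1 + η) * ‖z t i w‖ ^ 2 + (1 + 1/η) * ‖δ t i w‖ ^ 2) μ :=
          ((hzint t i).const_mul _).add ((hδint t i).const_mul _)
        have hint : ∫ w, ‖z t i w + δ t i w‖ ^ 2 ∂μ ≤
            ∫ w, ((1 + η) * ‖z t i w‖ ^ 2 + (1 + 1/η) * ‖δ t i w‖ ^ 2) ∂μ := by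
          apply integral_mono_of_nonneg
          · filter_upwards with w; positivity
          · exact hgint
          · filter_upwards with w
            exact young_ineq η hη _ _
        rw [integral_add ((hzint t i).const_mul _) ((hδint t i).const_mul _),
            integral_const_mul, integral_const_mul] at hint
        have hz' : (1 + η) * ∫ w, ‖z t i w‖ ^ 2 ∂μ ≤ (1 + η) * C := by
          apply mul_le_mul_of_nonneg_left (hz t i); positivity
        have hcoef1 : ω * (1 + η) = ω * (1 + ω) / (1 - ω) := by
          rw [hηdef]; field_simp; ring
        have hcoef2 : ω * (1 + 1/η) = (1 + ω) / 2 := by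
          rw [hηdef]; field_simp; ring
        calc ω * ∫ w, ‖z t i w + δ t i w‖ ^ 2 ∂μ
            ≤ ω * ((1 + η) * C + (1 + 1/η) * ∫ w, ‖δ t i w‖ ^ 2 ∂μ) := by
              apply mul_le_mul_of_nonneg_left _ hω0
              linarith
          _ = ω * (1 + ω) / (1 - ω) * C + (1 + ω) / 2 * ∫ w, ‖δ t i w‖ ^ 2 ∂μ := by
              rw [mul_add, ← mul_assoc, ← mul_assoc, hcoef1, hcoef2]
    have hfix : ω * (1 + ω) / (1 - ω) * C + (1 + ω) / 2 * B = B := by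
      rw [hB]; field_simp; ring
    have hmono : (1 + ω) / 2 * ∫ w, ‖δ t i w‖ ^ 2 ∂μ ≤ (1 + ω) / 2 * B := by
      apply mul_le_mul_of_nonneg_left ih; linarith
    linarith
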